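/- For every nonempty subset f ⊆ {0,…,n} and every x ∈ CR_f, the collapsed point C_Σ(x) lies in the convex hull of the set of barycentres {ξ_g : f ⊆ g ⊆ {0,…,n}, g nonempty}. (This is the geometric content of the lemma asserting that the projection-valued function P built from the collapsing map is supported on simplices of the barycentric subdivision all of whose labels contain f.) -/

import Mathlib

open Finset

noncomputable section

/-- The affine hyperplane `E = {t ∈ ℝ^{n+1} : ∑ tᵢ = 1}`. -/
def planeE (n : ℕ) : Set (Fin (n+1) → ℝ) := {t | ∑ i, t i = 1}

/-- The standard n-simplex `Σ = {t ∈ E : tᵢ ≥ 0 ∀ i}`. -/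
def simplexS (n : ℕ) : Set (Fin (n+1) → ℝ) := {t | ∑ i, t i = 1 ∧ ∀ i, 0 ≤ t i}

/-- `R_f = {t ∈ E : tᵢ ≥ 0 for i ∈ f, tᵢ ≤ 0 for i ∉ f}`. -/
def regionR (n : ℕ) (f : Finset (Fin (n+1))) : Set (Fin (n+1) → ℝ) :=
  {t | ∑ i, t i = 1 ∧ (∀ i ∈ f, 0 ≤ t i) ∧ ∀ i ∉ f, t i ≤ 0}

/-- `R_{≤f} = {t ∈ E : tᵢ ≤ 0 for i ∉ f}`. -/
def regionRle (n : ℕ) (f : Finset (Fin (n+1))) : Set (Fin (n+1) → ℝ) :=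
  {t | ∑ i, t i = 1 ∧ ∀ i ∉ f, t i ≤ 0}

/-- The face `|f| = {t ∈ Σ : tᵢ = 0 for i ∉ f}`. -/
def faceF (n : ℕ) (f : Finset (Fin (n+1))) : Set (Fin (n+1) → ℝ) :=
  {t | (∑ i, t i = 1 ∧ ∀ i, 0 ≤ t i) ∧ ∀ i ∉ f, t i = 0}

/-- `CR_f = {t ∈ Σ : tᵢ ≥ L for i ∈ f, tᵢ ≤ L for i ∉ f}`. -/
def regionCR (n : ℕ) (L : ℝ) (f : Finset (Fin (n+1))) : Set (Fin (n+1) → ℝ) :=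
  {t | (∑ i, t i = 1 ∧ ∀ i, 0 ≤ t i) ∧ (∀ i ∈ f, L ≤ t i) ∧ ∀ i ∉ f, t i ≤ L}

/-- The barycentre `ξ_f` of the face `|f|`. -/
def bary (n : ℕ) (f : Finset (Fin (n+1))) : Fin (n+1) → ℝ :=
  fun i => if i ∈ f then (f.card : ℝ)⁻¹ else 0

/-- The retraction `q : E → Σ`, `q(t) = [max(t₀,0),…,max(tₙ,0)]`. -/
def retr (n : ℕ) (t : Fin (n+1) → ℝ) : Fin (n+1) → ℝ :=
  fun i => (∑ j, max (t j) 0)⁻¹ * max (t i) 0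

/-- The collapsing map `C_Σ : Σ → Σ`, `C_Σ(t) = [min(t₀,L),…,min(tₙ,L)]`. -/
def collapse (n : ℕ) (L : ℝ) (t : Fin (n+1) → ℝ) : Fin (n+1) → ℝ :=
  fun i => (∑ j, min (t j) L)⁻¹ * min (t i) L

/-- The radial expansion `r_λ : E → E`. -/
def rexp (n : ℕ) (lam : ℝ) (t : Fin (n+1) → ℝ) : Fin (n+1) → ℝ :=
  fun i => lam * t i - (lam - 1) / ((n : ℝ) + 1)

lemma bary_sum (n : ℕ) (T : Finset (Fin (n+1))) (hT : T.Nonempty) :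
    ∑ j, bary n T j = 1 := by
  have hc : (T.card : ℝ) ≠ 0 := by
    exact_mod_cast Finset.card_ne_zero_of_mem hT.choose_spec
  rw [Finset.sum_congr rfl (fun j _ => rfl)]
  simp only [bary]
  rw [Finset.sum_ite_mem, Finset.univ_inter, Finset.sum_const, nsmul_eq_mul]
  field_simp

lemma key (n : ℕ) (f : Finset (Fin (n+1))) (hf : f.Nonempty) :
    ∀ N : ℕ, ∀ y : Fin (n+1) → ℝ,
      (Finset.univ.filter (fun j => 0 < y j)).card ≤ N →
      ∑ i, y i = 1 → (∀ i, 0 ≤ y i) → (∀ i ∈ f, ∀ j, y j ≤ y i) →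
      y ∈ convexHull ℝ
        {z : Fin (n+1) → ℝ | ∃ g : Finset (Fin (n+1)), g.Nonempty ∧ f ⊆ g ∧ z = bary n g} := by
  intro N
  induction N with
  | zero =>
      intro y hcard hsum hnn _
      exfalso
      have hz : ∀ i, y i = 0 := by
        intro i
        by_contra h
        have hpos : 0 < y i := lt_of_le_of_ne (hnn i) (Ne.symm h)
        have hmem : i ∈ Finset.univ.filter (fun j => 0 < y j) := by simp [hpos]
        have := Finset.card_pos.mpr ⟨i, hmem⟩
        omega
      simp [hz] at hsum
  | succ N ih =>
      intro y hcard hsum hnn hmax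
      set T := Finset.univ.filter (fun j => 0 < y j) with hTdef
      have hyT : ∀ j, j ∉ T → y j = 0 := by
        intro j hj
        have : ¬ 0 < y j := by simpa [hTdef] using hj
        linarith [hnn j]
      obtain ⟨i₀, hi₀f⟩ := hf
      have hi₀pos : 0 < y i₀ := by
        by_contra h
        push_neg at h
        have hy0 : ∀ j, y j = 0 := fun j =>
          le_antisymm (le_trans (hmax i₀ hi₀f j) h) (hnn j)
        simp [hy0] at hsum
      have hfT : f ⊆ T := by
        intro i hi
        have : 0 < y i := lt_of_lt_of_le hi₀pos (hmax i hi i₀)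
        simp [hTdef, this]
      have hTne : T.Nonempty := ⟨i₀, hfT hi₀f⟩
      have hTcard : (0:ℝ) < T.card := by exact_mod_cast Finset.card_pos.mpr hTne
      obtain ⟨j₀, hj₀T, hj₀min⟩ := Finset.exists_min_image T y hTne
      set m := y j₀ with hm
      have hmpos : 0 < m := by simpa [hTdef] using hj₀T
      have hsumT : ∑ j ∈ T, y j = 1 := by
        rw [← hsum]
        exact Finset.sum_subset (Finset.subset_univ T) (fun j _ hj => hyT j hj)
      by_cases hcase : y i₀ = m
      · have hall : ∀ j ∈ T, y j = m := fun j hj =>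
          le_antisymm (hcase ▸ hmax i₀ hi₀f j) (hj₀min j hj)
        have hmT : m * T.card = 1 := by
          rw [← hsumT, Finset.sum_congr rfl hall, Finset.sum_const, nsmul_eq_mul, mul_comm]
        have hy : y = bary n T := by
          funext j
          by_cases hj : j ∈ T
          · simp only [bary, if_pos hj, hall j hj]
            field_simp
            linarith [hmT]
          · simp [bary, hj, hyT j hj]
        exact subset_convexHull ℝ _ ⟨T, hTne, hfT, hy⟩
      · have hlt : m < y i₀ := lt_of_le_of_ne (hj₀min i₀ (hfT hi₀f)) (Ne.symm hcase)
        set c := m * T.card with hc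
        have hc0 : 0 < c := mul_pos hmpos hTcard
        have hc1 : c < 1 := by
          have hstrict : ∑ _j ∈ T, m < ∑ j ∈ T, y j := by
            apply Finset.sum_lt_sum (fun j hj => hj₀min j hj)
            exact ⟨i₀, hfT hi₀f, hlt⟩
          rw [Finset.sum_const, nsmul_eq_mul] at hstrict
          rw [hsumT] at hstrict
          rw [hc, mul_comm]
          exact hstrict
        have h1c : (0:ℝ) < 1 - c := by linarith
        set z : Fin (n+1) → ℝ := fun j => (1-c)⁻¹ * (y j - c * bary n T j) with hzdef
        have hbval : ∀ j ∈ T, c * bary n T j = m := by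
          intro j hj
          simp only [bary, if_pos hj, hc]
          field_simp
        have hzT : ∀ j ∈ T, z j = (1-c)⁻¹ * (y j - m) := by
          intro j hj; simp only [hzdef, hbval j hj]
        have hzT' : ∀ j, j ∉ T → z j = 0 := by
          intro j hj
          simp [hzdef, bary, fun h => hj (by simpa [hTdef] using h), hyT j hj]
          intro hjT; exact absurd hjT hj
        have hznn : ∀ j, 0 ≤ z j := by
          intro j
          by_cases hj : j ∈ T
          · rw [hzT j hj]
            have h := hj₀min j hj
            have h1 : (0:ℝ) ≤ (1-c)⁻¹ := by positivity
            exact mul_nonneg h1 (by linarith)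
          · rw [hzT' j hj]
        have hzsum : ∑ j, z j = 1 := by
          simp only [hzdef]
          rw [← Finset.mul_sum]
          rw [Finset.sum_sub_distrib, ← Finset.mul_sum, bary_sum n T hTne, hsum]
          field_simp
        have hzcard : (Finset.univ.filter (fun j => 0 < z j)).card ≤ N := by
          have hsub : Finset.univ.filter (fun j => 0 < z j) ⊆ T.erase j₀ := by
            intro j hj
            simp only [Finset.mem_filter] at hj
            have hjT : j ∈ T := by
              by_contra h
              rw [hzT' j h] at hj
              exact lt_irrefl 0 hj.2
            refine Finset.mem_erase.mpr ⟨?_, hjT⟩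
            intro hjj
            subst hjj
            rw [hzT j hjT] at hj
            simp [hm] at hj
          have := Finset.card_le_card hsub
          have h2 : (T.erase j₀).card = T.card - 1 := Finset.card_erase_of_mem hj₀T
          have h3 : T.card ≤ N + 1 := hcard
          omega
        have hzmax : ∀ i ∈ f, ∀ j, z j ≤ z i := by
          intro i hi j
          have hiT : i ∈ T := hfT hi
          have hzi : 0 ≤ z i := hznn i
          by_cases hj : j ∈ T
          · rw [hzT j hj, hzT i hiT]
            have := hmax i hi j
            have h1 : (0:ℝ) ≤ (1-c)⁻¹ := by positivity
            apply mul_le_mul_of_nonneg_left _ h1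
            linarith
          · rw [hzT' j hj]; exact hzi
        have hzhull := ih z hzcard hzsum hznn hzmax
        have hbary : bary n T ∈ convexHull ℝ
            {z : Fin (n+1) → ℝ | ∃ g : Finset (Fin (n+1)), g.Nonempty ∧ f ⊆ g ∧ z = bary n g} :=
          subset_convexHull ℝ _ ⟨T, hTne, hfT, rfl⟩
        have hcombo := (convex_convexHull ℝ
            {z : Fin (n+1) → ℝ | ∃ g : Finset (Fin (n+1)), g.Nonempty ∧ f ⊆ g ∧ z = bary n g})
            hbary hzhull hc0.le h1c.le (by ring)
        convert hcombo using 1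
        funext j
        simp only [Pi.add_apply, Pi.smul_apply, smul_eq_mul, hzdef]
        field_simp
        ring

/-- For x ∈ CR_f, the collapsed point C_Σ(x) lies in the convex hull of the
barycentres ξ_g with f ⊆ g. -/
theorem stmt1 (n : ℕ) (L : ℝ) (hL0 : 0 < L) (hL1 : L < 1 / ((n : ℝ) + 1))
    (f : Finset (Fin (n+1))) (hf : f.Nonempty)
    (x : Fin (n+1) → ℝ) (hx : x ∈ regionCR n L f) :
    collapse n L x ∈ convexHull ℝ
      {y : Fin (n+1) → ℝ | ∃ g : Finset (Fin (n+1)), g.Nonempty ∧ f ⊆ g ∧ y = bary n g} := by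
  obtain ⟨⟨hsum, hnn⟩, hfL, hle⟩ := hx
  obtain ⟨i₀, hi₀f⟩ := hf
  set S := ∑ j, min (x j) L with hS
  have hterm_nn : ∀ j, 0 ≤ min (x j) L := fun j => le_min (hnn j) hL0.le
  have hterm_f : ∀ i ∈ f, min (x i) L = L := fun i hi => min_eq_right (hfL i hi)
  have hSL : L ≤ S :=
    calc L = min (x i₀) L := (hterm_f i₀ hi₀f).symm
      _ ≤ S := Finset.single_le_sum (fun j _ => hterm_nn j) (Finset.mem_univ i₀)
  have hSpos : 0 < S := lt_of_lt_of_le hL0 hSL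
  have h1 : ∑ i, collapse n L x i = 1 := by
    simp only [collapse, ← Finset.mul_sum, ← hS]
    field_simp
  have h2 : ∀ i, 0 ≤ collapse n L x i := by
    intro i
    simp only [collapse, ← hS]
    exact mul_nonneg (inv_nonneg.mpr hSpos.le) (hterm_nn i)
  have h3 : ∀ i ∈ f, ∀ j, collapse n L x j ≤ collapse n L x i := by
    intro i hi j
    simp only [collapse, ← hS, hterm_f i hi]
    have h4 : (0:ℝ) ≤ S⁻¹ := by positivity
    exact mul_le_mul_of_nonneg_left (min_le_right _ _) h4
  exact key n f ⟨i₀, hi₀f⟩ (n+1) (collapse n L x)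
    (le_trans (Finset.card_le_card (Finset.filter_subset _ _)) (by simp)) h1 h2 h3
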